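/- Under the stated boundedness and strong Slater assumptions, let ξ̂ ∈ Ω(p̂) be any optimal solution, i.e. ξ̂_i = v(p̂). Then for every direction d ∈ ℝ^{n_p}, the one-sided limit lim_{t→0⁺} (v(p̂ + t·d) − v(p̂))/t exists, is finite, and equals the optimal value of the linear program: minimize w_i over w ∈ ℝ^{n_x} subject to ⟨∇_ξ g_k(ξ̂,p̂), w⟩ ≤ −⟨∇_p g_k(ξ̂,p̂), d⟩ for every k ∈ {1,…,n_g} with g_k(ξ̂,p̂) = 0, and A·w = −C·d. -/

import Mathlib

set_option maxHeartbeats 1000000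

open Matrix Set Filter Topology

lemma convex_grad_ineq {E : Type*} [NormedAddCommGroup E] [NormedSpace ℝ E] {f : E → ℝ}
    (hc : ConvexOn ℝ Set.univ f) (hd : Differentiable ℝ f) (z0 z : E) :
    f z0 + fderiv ℝ f z0 (z - z0) ≤ f z := by
  set φ : ℝ → ℝ := fun s => f (z0 + s • (z - z0)) with hφ
  have hline : ∀ s : ℝ, HasDerivAt (fun s : ℝ => z0 + s • (z - z0)) (z - z0) s := by
    intro s
    simpa using ((hasDerivAt_id s).smul_const (z - z0)).const_add z0
  have hφd : HasDerivAt φ (fderiv ℝ f z0 (z - z0)) 0 := by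
    have h1 := (hd (z0 + (0:ℝ) • (z - z0))).hasFDerivAt.comp_hasDerivAt 0 (hline 0)
    simp only [zero_smul, add_zero] at h1
    exact h1
  have hφc : ConvexOn ℝ Set.univ φ := by
    have := hc.comp_affineMap (AffineMap.lineMap z0 z)
    have heq : ∀ s : ℝ, (AffineMap.lineMap z0 z) s = z0 + s • (z - z0) := by
      intro s; simp [AffineMap.lineMap_apply]; module
    have h2 : ConvexOn ℝ Set.univ (f ∘ (AffineMap.lineMap z0 z)) :=
      this.subset (by simp) convex_univ
    refine h2.congr ?_
    intro s _
    simp [Function.comp, heq s, hφ]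
  have hslope := hφc.le_slope_of_hasDerivAt (mem_univ (0:ℝ)) (mem_univ (1:ℝ)) one_pos hφd
  have : slope φ 0 1 = f z - f z0 := by
    simp [slope_def_field, hφ]
  rw [this] at hslope
  linarith

lemma eventually_neg_of_deriv_neg {φ : ℝ → ℝ} {c : ℝ} (h0 : φ 0 = 0)
    (hd : HasDerivAt φ c 0) (hc : c < 0) : ∀ᶠ t in 𝓝[>] (0:ℝ), φ t < 0 := by
  have h1 : Tendsto (slope φ 0) (𝓝[≠] 0) (𝓝 c) := hasDerivAt_iff_tendsto_slope.1 hd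
  have h2 : Tendsto (slope φ 0) (𝓝[>] 0) (𝓝 c) :=
    h1.mono_left (nhdsWithin_mono _ (fun x hx => ne_of_gt hx))
  have h3 : ∀ᶠ t in 𝓝[>] (0:ℝ), slope φ 0 t < 0 := h2.eventually (gt_mem_nhds hc)
  filter_upwards [h3, self_mem_nhdsWithin] with t hs ht
  have ht' : (0:ℝ) < t := ht
  have : slope φ 0 t = φ t / t := by simp [slope_def_field, h0]
  rw [this] at hs
  rcases div_neg_iff.1 hs with ⟨_, h⟩ | ⟨h, _⟩
  · linarith
  · exact h

lemma mulVec_surjective_of_rows_indep {nh nx : ℕ} (A : Matrix (Fin nh) (Fin nx) ℝ)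
    (hA : LinearIndependent ℝ (fun j : Fin nh => A j)) :
    Function.Surjective A.mulVec := by
  have hrank : A.rank = nh := by
    simpa using hA.rank_matrix
  have : LinearMap.range A.mulVecLin = ⊤ := by
    apply Submodule.eq_top_of_finrank_eq
    rw [← Matrix.rank]
    simp [hrank]
  intro y
  have : y ∈ LinearMap.range A.mulVecLin := this ▸ Submodule.mem_top
  obtain ⟨x, hx⟩ := this
  exact ⟨x, hx⟩


lemma le_of_forall_pos_le_add' {a b : ℝ} (h : ∀ ε : ℝ, 0 < ε → a ≤ b + ε) : a ≤ b := by
  by_contra hab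
  push_neg at hab
  have := h ((a - b)/2) (by linarith)
  linarith

/-- under boundedness and the strong Slater condition, the
directional derivative of the optimal-value function `v` at `p̂` in any direction
`d` exists, is finite, and equals the optimal value of an auxiliary linear
program built from any optimal solution `ξ̂` and the active constraints. -/
theorem optimal_value_directional_derivative_LP
    (nx np ng nh : ℕ) (hnx : 0 < nx) (hnp : 0 < np) (hng : 0 < ng) (hnh : 0 < nh)
    (g : Fin ng → (Fin nx → ℝ) → (Fin np → ℝ) → ℝ)
    (hg_smooth : ∀ k : Fin ng,
      ContDiff ℝ 1 (fun q : (Fin nx → ℝ) × (Fin np → ℝ) => g k q.1 q.2))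
    (hg_convex : ∀ k : Fin ng,
      ConvexOn ℝ Set.univ (fun q : (Fin nx → ℝ) × (Fin np → ℝ) => g k q.1 q.2))
    (A : Matrix (Fin nh) (Fin nx) ℝ) (C : Matrix (Fin nh) (Fin np) ℝ)
    (b : Fin nh → ℝ)
    (hA : LinearIndependent ℝ (fun j : Fin nh => A j))
    (Ω : (Fin np → ℝ) → Set (Fin nx → ℝ))
    (hΩ : ∀ p, Ω p =
      {ξ | A.mulVec ξ + C.mulVec p + b = 0 ∧ ∀ k : Fin ng, g k ξ p ≤ 0})
    (i : Fin nx)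
    (v : (Fin np → ℝ) → ℝ)
    (hv : ∀ p, v p = sInf ((fun ξ => ξ i) '' Ω p))
    (phat : Fin np → ℝ)
    (hbdd : ∃ R : ℝ, 0 < R ∧ ∀ p : Fin np → ℝ, ∀ ξ ∈ Ω p, ‖ξ‖ ≤ R)
    (N : Set (Fin np → ℝ)) (hNopen : IsOpen N) (hpN : phat ∈ N)
    (hslater : ∀ p ∈ N, ∃ ξ : Fin nx → ℝ,
      A.mulVec ξ + C.mulVec p + b = 0 ∧ ∀ k : Fin ng, g k ξ p < 0)
    (ξhat : Fin nx → ℝ) (hξfeas : ξhat ∈ Ω phat) (hξopt : ξhat i = v phat)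
    (W : (Fin np → ℝ) → Set (Fin nx → ℝ))
    (hW : ∀ d, W d = {w : Fin nx → ℝ |
      (∀ k : Fin ng, g k ξhat phat = 0 →
        fderiv ℝ (fun ξ => g k ξ phat) ξhat w ≤
          -(fderiv ℝ (fun p => g k ξhat p) phat d)) ∧
      A.mulVec w = -(C.mulVec d)}) :
    ∀ d : Fin np → ℝ,
      (W d).Nonempty ∧ BddBelow ((fun w => w i) '' W d) ∧
      Tendsto (fun t : ℝ => (v (phat + t • d) - v phat) / t) (𝓝[>] 0)
        (𝓝 (sInf ((fun w => w i) '' W d))) := by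
  obtain ⟨R, hR, hRb⟩ := hbdd
  -- notation
  set G : Fin ng → (Fin nx → ℝ) × (Fin np → ℝ) → ℝ :=
    fun k q => g k q.1 q.2 with hG
  have hGdiff : ∀ k, Differentiable ℝ (G k) := fun k => (hg_smooth k).differentiable one_ne_zero
  set D : Fin ng → ((Fin nx → ℝ) × (Fin np → ℝ)) →L[ℝ] ℝ :=
    fun k => fderiv ℝ (G k) (ξhat, phat) with hD
  -- partial derivative identities
  have hDx : ∀ k (w : Fin nx → ℝ),
      fderiv ℝ (fun ξ => g k ξ phat) ξhat w = D k (w, 0) := by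
    intro k w
    have h1 : HasFDerivAt (fun ξ : Fin nx → ℝ => g k ξ phat)
        ((D k).comp (ContinuousLinearMap.inl ℝ (Fin nx → ℝ) (Fin np → ℝ))) ξhat := by
      have := HasFDerivAt.comp ξhat ((hGdiff k (ξhat, phat)).hasFDerivAt)
        (hasFDerivAt_prodMk_left (𝕜 := ℝ) ξhat phat)
      exact this
    rw [h1.fderiv]
    simp
  have hDp : ∀ k (u : Fin np → ℝ),
      fderiv ℝ (fun p => g k ξhat p) phat u = D k (0, u) := by
    intro k u
    have h1 : HasFDerivAt (fun p : Fin np → ℝ => g k ξhat p)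
        ((D k).comp (ContinuousLinearMap.inr ℝ (Fin nx → ℝ) (Fin np → ℝ))) phat :=
      HasFDerivAt.comp phat ((hGdiff k (ξhat, phat)).hasFDerivAt)
        (hasFDerivAt_prodMk_right ξhat phat)
    rw [h1.fderiv]
    simp
  have hDsum : ∀ k (w : Fin nx → ℝ) (u : Fin np → ℝ), D k (w, u) = D k (w, 0) + D k (0, u) := by
    intro k w u
    rw [← map_add]
    congr 1
    simp
  -- gradient inequality
  have hgrad : ∀ k (ξ : Fin nx → ℝ) (p : Fin np → ℝ),
      g k ξhat phat + D k (ξ - ξhat, p - phat) ≤ g k ξ p := by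
    intro k ξ p
    have := convex_grad_ineq (hg_convex k) (hGdiff k) (ξhat, phat) (ξ, p)
    simpa [hG, hD, Prod.mk_sub_mk] using this
  -- feasibility of ξhat
  have hξfeas' : A.mulVec ξhat + C.mulVec phat + b = 0 ∧ ∀ k, g k ξhat phat ≤ 0 := by
    rwa [hΩ phat] at hξfeas
  -- Slater point at phat
  obtain ⟨ξs, hξs_eq, hξs_lt⟩ := hslater phat hpN
  set w0 : Fin nx → ℝ := ξs - ξhat with hw0
  have hAw0 : A.mulVec w0 = 0 := by
    rw [hw0, Matrix.mulVec_sub]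
    have h1 := hξfeas'.1
    have h2 := hξs_eq
    have h3 : A.mulVec ξs + C.mulVec phat + b = A.mulVec ξhat + C.mulVec phat + b :=
      h2.trans h1.symm
    have h4 : A.mulVec ξs = A.mulVec ξhat := by
      have h5 := add_right_cancel h3
      exact add_right_cancel h5
    rw [h4, sub_self]
  have hw0neg : ∀ k, g k ξhat phat = 0 → D k (w0, 0) < 0 := by
    intro k hk
    have h1 := hgrad k ξs phat
    rw [hk] at h1
    have : g k ξs phat < 0 := hξs_lt k
    have h2 : (phat - phat) = (0 : Fin np → ℝ) := sub_self phat
    rw [h2] at h1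
    simpa [hw0] using lt_of_le_of_lt (by linarith : D k (ξs - ξhat, 0) ≤ g k ξs phat) this
  -- basic facts about Ω and v
  have hbddΩ : ∀ p, BddBelow ((fun ξ => ξ i) '' Ω p) := by
    intro p
    refine ⟨-R, ?_⟩
    rintro x ⟨ξ, hξ, rfl⟩
    have h1 : ‖ξ i‖ ≤ ‖ξ‖ := norm_le_pi_norm ξ i
    have h2 := hRb p ξ hξ
    have := abs_le.1 (le_trans (by simpa using h1) h2)
    linarith [this.1]
  have hvle : ∀ p, ∀ ξ ∈ Ω p, v p ≤ ξ i := by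
    intro p ξ hξ
    rw [hv p]
    exact csInf_le (hbddΩ p) ⟨ξ, hξ, rfl⟩
  have hvlt : ∀ p, (Ω p).Nonempty → ∀ ε : ℝ, 0 < ε → ∃ ξ ∈ Ω p, ξ i < v p + ε := by
    intro p hne ε hε
    have hne' : ((fun ξ => ξ i) '' Ω p).Nonempty := hne.image _
    obtain ⟨x, hx, hlt⟩ := Real.lt_sInf_add_pos hne' hε
    obtain ⟨ξ, hξ, rfl⟩ := hx
    exact ⟨ξ, hξ, by rwa [hv p]⟩
  have hΩne : ∀ p ∈ N, (Ω p).Nonempty := by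
    intro p hp
    obtain ⟨ξ, h1, h2⟩ := hslater p hp
    exact ⟨ξ, by rw [hΩ p]; exact ⟨h1, fun k => (h2 k).le⟩⟩
  intro d
  -- δ such that phat + t • d ∈ N for |t| < δ
  have hcont : Continuous (fun t : ℝ => phat + t • d) :=
    continuous_const.add (continuous_id.smul continuous_const)
  have hev : ∀ᶠ t : ℝ in 𝓝 0, phat + t • d ∈ N := by
    have h0 : phat + (0:ℝ) • d ∈ N := by simpa using hpN
    exact hcont.continuousAt.eventually_mem (hNopen.mem_nhds h0)
  obtain ⟨δ, hδ, hδN⟩ : ∃ δ : ℝ, 0 < δ ∧ ∀ t : ℝ, |t| < δ → phat + t • d ∈ N := by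
    obtain ⟨ε, hε, h⟩ := Metric.eventually_nhds_iff.1 hev
    exact ⟨ε, hε, fun t ht => h (by simpa [Real.dist_eq] using ht)⟩
  -- eventual feasibility of directions
  have hfeasdir : ∀ u : Fin nx → ℝ, A.mulVec u = -(C.mulVec d) →
      (∀ k, g k ξhat phat = 0 → D k (u, d) < 0) →
      ∀ᶠ t in 𝓝[>] (0:ℝ), (ξhat + t • u) ∈ Ω (phat + t • d) := by
    intro u hAu hneg
    have heq : ∀ t : ℝ, A.mulVec (ξhat + t • u) + C.mulVec (phat + t • d) + b = 0 := by
      intro t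
      rw [Matrix.mulVec_add, Matrix.mulVec_add, Matrix.mulVec_smul, Matrix.mulVec_smul, hAu,
        smul_neg]
      have h2 : A.mulVec ξhat + -(t • C.mulVec d) + (C.mulVec phat + t • C.mulVec d) + b
          = A.mulVec ξhat + C.mulVec phat + b := by abel
      rw [h2, hξfeas'.1]
    have hgs : ∀ᶠ t in 𝓝[>] (0:ℝ), ∀ k, g k (ξhat + t • u) (phat + t • d) < 0 := by
      rw [eventually_all]
      intro k
      by_cases hk : g k ξhat phat = 0
      · have hin : HasDerivAt (fun t : ℝ => ((ξhat + t • u, phat + t • d) :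
            (Fin nx → ℝ) × (Fin np → ℝ))) (u, d) 0 := by
          have h1 : HasDerivAt (fun t : ℝ => ξhat + t • u) u 0 := by
            simpa using ((hasDerivAt_id (0:ℝ)).smul_const u).const_add ξhat
          have h2 : HasDerivAt (fun t : ℝ => phat + t • d) d 0 := by
            simpa using ((hasDerivAt_id (0:ℝ)).smul_const d).const_add phat
          exact h1.prodMk h2
        have hder : HasDerivAt (fun t : ℝ => g k (ξhat + t • u) (phat + t • d)) (D k (u, d)) 0 := by
          have h3 := ((hGdiff k ((ξhat + (0:ℝ) • u, phat + (0:ℝ) • d))).hasFDerivAt).comp_hasDerivAt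
            0 hin
          simp only [zero_smul, add_zero] at h3
          exact h3
        exact eventually_neg_of_deriv_neg (by simpa using hk) hder (hneg k hk)
      · have hlt : g k ξhat phat < 0 := lt_of_le_of_ne (hξfeas'.2 k) hk
        have hcont2 : Continuous (fun t : ℝ => g k (ξhat + t • u) (phat + t • d)) := by
          have hx : Continuous (fun t : ℝ => ξhat + t • u) :=
            continuous_const.add (continuous_id.smul continuous_const)
          have hp : Continuous (fun t : ℝ => phat + t • d) :=
            continuous_const.add (continuous_id.smul continuous_const)
          exact (hg_smooth k).continuous.comp (hx.prodMk hp)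
        have h0 : (fun t : ℝ => g k (ξhat + t • u) (phat + t • d)) 0 < 0 := by simpa using hlt
        have hev2 : ∀ᶠ t in 𝓝 (0:ℝ), g k (ξhat + t • u) (phat + t • d) < 0 :=
          hcont2.continuousAt.eventually (gt_mem_nhds h0)
        exact hev2.filter_mono nhdsWithin_le_nhds
    filter_upwards [hgs] with t hg2
    rw [hΩ]
    exact ⟨heq t, fun k => (hg2 k).le⟩
  -- membership of difference quotients in W d (lower bound mechanism)
  have hWmem : ∀ t : ℝ, 0 < t → ∀ ξt ∈ Ω (phat + t • d), t⁻¹ • (ξt - ξhat) ∈ W d := by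
    intro t ht ξt hξt
    rw [hΩ] at hξt
    obtain ⟨he, hgle⟩ := hξt
    rw [Matrix.mulVec_add, Matrix.mulVec_smul] at he
    have h3 : A.mulVec ξt - A.mulVec ξhat + t • C.mulVec d = 0 := by
      have h4 : A.mulVec ξt - A.mulVec ξhat + t • C.mulVec d
          = (A.mulVec ξt + (C.mulVec phat + t • C.mulVec d) + b)
            - (A.mulVec ξhat + C.mulVec phat + b) := by abel
      rw [h4, he, hξfeas'.1, sub_zero]
    have e2 : A.mulVec ξt - A.mulVec ξhat = -(t • C.mulVec d) :=
      eq_neg_of_add_eq_zero_left h3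
    rw [hW]
    refine ⟨?_, ?_⟩
    · intro k hk
      rw [hDx, hDp]
      have h1 := hgrad k ξt (phat + t • d)
      rw [hk, zero_add] at h1
      have h2 : phat + t • d - phat = t • d := by abel
      rw [h2] at h1
      have h5 : (ξt - ξhat, t • d) = t • ((t⁻¹ • (ξt - ξhat), d) :
          (Fin nx → ℝ) × (Fin np → ℝ)) := by
        rw [Prod.smul_mk]
        congr 1
        rw [smul_inv_smul₀ ht.ne']
      have h6 : D k (ξt - ξhat, t • d) = t * D k (t⁻¹ • (ξt - ξhat), d) := by
        rw [h5, _root_.map_smul, smul_eq_mul]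
      have h7 : t * D k (t⁻¹ • (ξt - ξhat), d) ≤ 0 := le_trans (h6 ▸ h1) (hgle k)
      have h8 : D k (t⁻¹ • (ξt - ξhat), d) ≤ 0 := by nlinarith
      rw [hDsum] at h8
      linarith
    · rw [Matrix.mulVec_smul, Matrix.mulVec_sub, e2, smul_neg, smul_smul,
        inv_mul_cancel₀ ht.ne', one_smul]
  -- the LP is nonempty
  have hWne : (W d).Nonempty := by
    obtain ⟨w1, hw1⟩ := mulVec_surjective_of_rows_indep A hA (-(C.mulVec d))
    classical
    have hFinNe : (Finset.univ : Finset (Fin ng)).Nonempty := ⟨⟨0, hng⟩, Finset.mem_univ _⟩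
    set Mk : Fin ng → ℝ := fun k =>
      if g k ξhat phat = 0 then (D k (w1, 0) + D k (0, d)) / (-(D k (w0, 0))) else 0 with hMk
    set M : ℝ := max 0 (Finset.univ.sup' hFinNe Mk) with hM
    refine ⟨w1 + M • w0, ?_⟩
    rw [hW]
    refine ⟨?_, ?_⟩
    · intro k hk
      rw [hDx, hDp]
      have hneg := hw0neg k hk
      have hMle : Mk k ≤ M :=
        le_trans (Finset.le_sup' Mk (Finset.mem_univ k)) (le_max_right _ _)
      have hMkk : Mk k = (D k (w1, 0) + D k (0, d)) / (-(D k (w0, 0))) := by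
        rw [hMk]; simp [hk]
      rw [hMkk] at hMle
      rw [div_le_iff₀ (by linarith : (0:ℝ) < -(D k (w0, 0)))] at hMle
      have hsplit : D k (w1 + M • w0, 0) = D k (w1, 0) + M * D k (w0, 0) := by
        have hq : ((w1 + M • w0, (0 : Fin np → ℝ)) : (Fin nx → ℝ) × (Fin np → ℝ))
            = (w1, 0) + M • (w0, 0) := by
          rw [Prod.smul_mk, Prod.mk_add_mk]
          congr 1
          simp
        rw [hq, map_add, _root_.map_smul, smul_eq_mul]
      rw [hsplit]
      rw [mul_neg] at hMle
      linarith
    · rw [Matrix.mulVec_add, Matrix.mulVec_smul, hw1, hAw0, smul_zero, add_zero]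
  -- convexity of v along affine combinations
  have hconv : ∀ t1 t2 : ℝ, |t1| < δ → |t2| < δ → ∀ a bb : ℝ, 0 ≤ a → 0 ≤ bb → a + bb = 1 →
      v (phat + (a*t1 + bb*t2) • d) ≤ a * v (phat + t1 • d) + bb * v (phat + t2 • d) := by
    intro t1 t2 h1 h2 a bb ha hb hab
    apply le_of_forall_pos_le_add'
    intro ε hε
    obtain ⟨ξ1, hξ1, hξ1i⟩ := hvlt _ (hΩne _ (hδN t1 h1)) ε hε
    obtain ⟨ξ2, hξ2, hξ2i⟩ := hvlt _ (hΩne _ (hδN t2 h2)) ε hε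
    rw [hΩ] at hξ1 hξ2
    have hpcomb : a • (phat + t1 • d) + bb • (phat + t2 • d) = phat + (a*t1 + bb*t2) • d := by
      have hp1 : a • phat + bb • phat = phat := by rw [← add_smul, hab, one_smul]
      calc a • (phat + t1 • d) + bb • (phat + t2 • d)
          = (a • phat + bb • phat) + ((a*t1) • d + (bb*t2) • d) := by
            rw [smul_add, smul_add, smul_smul, smul_smul]; abel
        _ = phat + (a*t1 + bb*t2) • d := by rw [hp1, ← add_smul]
    have hmem : a • ξ1 + bb • ξ2 ∈ Ω (phat + (a*t1 + bb*t2) • d) := by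
      rw [hΩ]
      constructor
      · have hcomb : a • (A.mulVec ξ1 + C.mulVec (phat + t1 • d) + b)
            + bb • (A.mulVec ξ2 + C.mulVec (phat + t2 • d) + b) = 0 := by
          rw [hξ1.1, hξ2.1, smul_zero, smul_zero, add_zero]
        have hCp : C.mulVec (phat + (a*t1 + bb*t2) • d)
            = a • C.mulVec (phat + t1 • d) + bb • C.mulVec (phat + t2 • d) := by
          rw [← hpcomb, Matrix.mulVec_add, Matrix.mulVec_smul, Matrix.mulVec_smul]
        have hbb2 : b = a • b + bb • b := by rw [← add_smul, hab, one_smul]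
        calc A.mulVec (a • ξ1 + bb • ξ2) + C.mulVec (phat + (a*t1 + bb*t2) • d) + b
            = (a • A.mulVec ξ1 + bb • A.mulVec ξ2)
              + (a • C.mulVec (phat + t1 • d) + bb • C.mulVec (phat + t2 • d))
              + (a • b + bb • b) := by
              rw [Matrix.mulVec_add, Matrix.mulVec_smul, Matrix.mulVec_smul, hCp, ← hbb2]
          _ = a • (A.mulVec ξ1 + C.mulVec (phat + t1 • d) + b)
              + bb • (A.mulVec ξ2 + C.mulVec (phat + t2 • d) + b) := by
              rw [smul_add, smul_add, smul_add, smul_add]; abel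
          _ = 0 := hcomb
      · intro k
        have hcv := (hg_convex k).2 (mem_univ ((ξ1, phat + t1 • d) :
            (Fin nx → ℝ) × (Fin np → ℝ))) (mem_univ (ξ2, phat + t2 • d)) ha hb hab
        have hq : a • ((ξ1, phat + t1 • d) : (Fin nx → ℝ) × (Fin np → ℝ))
            + bb • (ξ2, phat + t2 • d) = (a • ξ1 + bb • ξ2, phat + (a*t1 + bb*t2) • d) := by
          rw [Prod.smul_mk, Prod.smul_mk, Prod.mk_add_mk, hpcomb]
        rw [hq] at hcv
        have hle : a • g k ξ1 (phat + t1 • d) + bb • g k ξ2 (phat + t2 • d) ≤ 0 := by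
          have := hξ1.2 k
          have := hξ2.2 k
          simp only [smul_eq_mul]
          have h5 : a * g k ξ1 (phat + t1 • d) ≤ 0 :=
            mul_nonpos_of_nonneg_of_nonpos ha (hξ1.2 k)
          have h6 : bb * g k ξ2 (phat + t2 • d) ≤ 0 :=
            mul_nonpos_of_nonneg_of_nonpos hb (hξ2.2 k)
          linarith
        exact le_trans hcv hle
    have hvle2 := hvle _ _ hmem
    have hcoord : (a • ξ1 + bb • ξ2) i = a * ξ1 i + bb * ξ2 i := by
      simp [smul_eq_mul]
    have h5 : a * ξ1 i ≤ a * (v (phat + t1 • d) + ε) :=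
      mul_le_mul_of_nonneg_left hξ1i.le ha
    have h6 : bb * ξ2 i ≤ bb * (v (phat + t2 • d) + ε) :=
      mul_le_mul_of_nonneg_left hξ2i.le hb
    have h7 : a * (v (phat + t1 • d) + ε) + bb * (v (phat + t2 • d) + ε)
        = a * v (phat + t1 • d) + bb * v (phat + t2 • d) + ε := by
      have : a * ε + bb * ε = ε := by rw [← add_mul, hab, one_mul]
      ring_nf
      nlinarith [this]
    nlinarith [hvle2, hcoord ▸ hvle2]
  -- slope notation
  set s : ℝ → ℝ := fun t => (v (phat + t • d) - v phat) / t with hs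
  -- convexity bound: m ≤ s t for small positive t
  set c : ℝ := δ / 2 with hc
  have hcpos : 0 < c := by positivity
  set m : ℝ := (v phat - v (phat + (-c) • d)) / c with hm
  have hmle : ∀ t : ℝ, 0 < t → t < c → m ≤ s t := by
    intro t ht htc
    have hct : (0:ℝ) < c + t := by linarith
    have h1 : |(-c : ℝ)| < δ := by rw [abs_neg, abs_of_pos hcpos]; rw [hc]; linarith
    have h2 : |t| < δ := by rw [abs_of_pos ht]; rw [hc] at htc; linarith
    have ha : (0:ℝ) ≤ t/(c+t) := div_nonneg ht.le hct.le
    have hb : (0:ℝ) ≤ c/(c+t) := div_nonneg hcpos.le hct.le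
    have hab : t/(c+t) + c/(c+t) = 1 := by
      rw [← add_div, add_comm t c, div_self hct.ne']
    have harg : t/(c+t) * (-c) + c/(c+t) * t = 0 := by
      have he : t/(c+t) * (-c) + c/(c+t) * t = (t*(-c) + c*t)/(c+t) := by ring
      rw [he, show t*(-c) + c*t = 0 by ring, zero_div]
    have hkey := hconv (-c) t h1 h2 (t/(c+t)) (c/(c+t)) ha hb hab
    rw [harg] at hkey
    simp only [zero_smul, add_zero] at hkey
    set vneg := v (phat + (-c) • d)
    set vt := v (phat + t • d)
    have h3 : (c+t) * (t/(c+t) * vneg + c/(c+t) * vt) = t*vneg + c*vt := by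
      field_simp
    have h4 : (c+t) * v phat ≤ t*vneg + c*vt := by
      have := mul_le_mul_of_nonneg_left hkey hct.le
      rw [h3] at this
      linarith
    rw [hm, hs]
    rw [div_le_div_iff₀ hcpos ht]
    nlinarith
  -- upper bound mechanism
  have hupper : ∀ w ∈ W d, ∀ ε : ℝ, 0 < ε →
      ∀ᶠ t in 𝓝[>] (0:ℝ), s t ≤ w i + ε * w0 i := by
    intro w hw ε hε
    rw [hW] at hw
    obtain ⟨hw1, hw2⟩ := hw
    have hu1 : A.mulVec (w + ε • w0) = -(C.mulVec d) := by
      rw [Matrix.mulVec_add, Matrix.mulVec_smul, hw2, hAw0, smul_zero, add_zero]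
    have hu2 : ∀ k, g k ξhat phat = 0 → D k (w + ε • w0, d) < 0 := by
      intro k hk
      have hle := hw1 k hk
      rw [hDx, hDp] at hle
      have hsplit : D k (w + ε • w0, d) = D k (w, 0) + ε * D k (w0, 0) + D k (0, d) := by
        have hq : ((w + ε • w0, d) : (Fin nx → ℝ) × (Fin np → ℝ))
            = (w, 0) + ε • (w0, 0) + (0, d) := by
          rw [Prod.smul_mk, Prod.mk_add_mk, Prod.mk_add_mk]
          congr 1 <;> simp
        rw [hq, map_add, map_add, _root_.map_smul, smul_eq_mul]
      rw [hsplit]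
      have hprod : ε * D k (w0, 0) < 0 := mul_neg_of_pos_of_neg hε (hw0neg k hk)
      linarith
    filter_upwards [hfeasdir (w + ε • w0) hu1 hu2, self_mem_nhdsWithin] with t hmem ht
    have ht' : (0:ℝ) < t := ht
    have h1 := hvle _ _ hmem
    have h2 : (ξhat + t • (w + ε • w0)) i = ξhat i + t * (w i + ε * w0 i) := by
      simp [smul_eq_mul]
      ring
    rw [h2] at h1
    rw [hs]
    rw [div_le_iff₀ ht']
    rw [← hξopt]
    linarith
  -- BddBelow
  have hWbdd : BddBelow ((fun w => w i) '' W d) := by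
    refine ⟨m, ?_⟩
    rintro x ⟨w, hwW, rfl⟩
    have hkey : ∀ ε : ℝ, 0 < ε → m ≤ w i + ε * w0 i := by
      intro ε hε
      have hIoo : Ioo (0:ℝ) c ∈ 𝓝[>] (0:ℝ) := Ioo_mem_nhdsGT_of_mem ⟨le_rfl, hcpos⟩
      obtain ⟨t, hst, ht0, htc⟩ := ((hupper w hwW ε hε).and hIoo).exists
      exact le_trans (hmle t ht0 htc) hst
    apply le_of_forall_pos_le_add'
    intro ε' hε'
    have hd1 : (0:ℝ) < |w0 i| + 1 := by positivity
    have hεp : (0:ℝ) < ε' / (|w0 i| + 1) := by positivity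
    have := hkey _ hεp
    have hb2 : ε' / (|w0 i| + 1) * w0 i ≤ ε' := by
      have h1 : ε' / (|w0 i| + 1) * w0 i ≤ ε' / (|w0 i| + 1) * |w0 i| :=
        mul_le_mul_of_nonneg_left (le_abs_self _) hεp.le
      have h2 : ε' / (|w0 i| + 1) * |w0 i| ≤ ε' / (|w0 i| + 1) * (|w0 i| + 1) :=
        mul_le_mul_of_nonneg_left (by linarith) hεp.le
      rw [div_mul_cancel₀ _ hd1.ne'] at h2
      linarith
    linarith
  -- lower bound eventually
  have hlow : ∀ᶠ t in 𝓝[>] (0:ℝ), sInf ((fun w => w i) '' W d) ≤ s t := by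
    have hIoo : Ioo (0:ℝ) δ ∈ 𝓝[>] (0:ℝ) := Ioo_mem_nhdsGT_of_mem ⟨le_rfl, hδ⟩
    filter_upwards [hIoo] with t htI
    obtain ⟨ht0, htδ⟩ := htI
    apply le_of_forall_pos_le_add'
    intro ε hε
    have hN' : phat + t • d ∈ N := hδN t (by rwa [abs_of_pos ht0])
    obtain ⟨ξt, hξt, hξti⟩ := hvlt _ (hΩne _ hN') (ε * t) (by positivity)
    have hmem := hWmem t ht0 ξt hξt
    have h1 : sInf ((fun w => w i) '' W d) ≤ (t⁻¹ • (ξt - ξhat)) i :=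
      csInf_le hWbdd ⟨_, hmem, rfl⟩
    have h2 : (t⁻¹ • (ξt - ξhat)) i = (ξt i - ξhat i) / t := by
      simp [div_eq_inv_mul]
    have h3 : (ξt i - ξhat i) / t ≤ s t + ε := by
      rw [hs]
      rw [div_le_iff₀ ht0, add_mul]
      rw [div_mul_cancel₀ _ ht0.ne']
      have := hξopt
      nlinarith
    rw [h2] at h1
    linarith
  refine ⟨hWne, hWbdd, ?_⟩
  rw [tendsto_order]
  constructor
  · intro a ha
    filter_upwards [hlow] with t hlt
    exact lt_of_lt_of_le ha hlt
  · intro a ha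
    set L := sInf ((fun w => w i) '' W d) with hL
    have hmid : L < (L + a) / 2 := by linarith
    obtain ⟨x, hx, hxa⟩ := exists_lt_of_csInf_lt (hWne.image _) hmid
    obtain ⟨w, hwW, rfl⟩ := hx
    have hwa : w i < a := by linarith
    set η := a - w i with hη
    have hηpos : 0 < η := by rw [hη]; linarith
    have hd1 : (0:ℝ) < |w0 i| + 1 := by positivity
    have hεp : (0:ℝ) < η / (2 * (|w0 i| + 1)) := by positivity
    filter_upwards [hupper w hwW _ hεp] with t hle
    have hb2 : η / (2 * (|w0 i| + 1)) * w0 i ≤ η / 2 := by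
      have h1 : η / (2 * (|w0 i| + 1)) * w0 i ≤ η / (2 * (|w0 i| + 1)) * |w0 i| :=
        mul_le_mul_of_nonneg_left (le_abs_self _) hεp.le
      have h2 : η / (2 * (|w0 i| + 1)) * |w0 i| ≤ η / (2 * (|w0 i| + 1)) * (|w0 i| + 1) :=
        mul_le_mul_of_nonneg_left (by linarith) hεp.le
      have h3 : η / (2 * (|w0 i| + 1)) * (|w0 i| + 1) = η / 2 := by
        field_simp
      linarith
    have : s t ≤ w i + η / 2 := le_trans hle (by linarith)
    rw [hη] at this
    linarith
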